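/- For every natural number m with m ≥ 2, the sum over j from 1 to m−1 of 1/sin⁴(πj/m) equals (m⁴ + 10m² − 11)/45. -/

import Mathlib

open Real Finset

open Polynomial

lemma derivative_prod_X_sub_C (S : Finset ℂ) :
    derivative (∏ μ ∈ S, (X - C μ)) = ∑ μ ∈ S, ∏ ν ∈ S.erase μ, (X - C ν) := by
  classical
  induction S using Finset.induction_on with
  | empty => simp
  | insert a s ha ih =>
    rw [Finset.prod_insert ha, derivative_mul, derivative_sub, derivative_X, derivative_C,
      sub_zero, one_mul, ih, Finset.mul_sum, Finset.sum_insert ha, Finset.erase_insert ha]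
    congr 1
    refine Finset.sum_congr rfl fun b hb => ?_
    rw [Finset.erase_insert_of_ne (by rintro rfl; exact ha hb),
      Finset.prod_insert (fun h => ha (Finset.mem_of_mem_erase h))]

lemma nat_sum_dF (r m : ℕ) :
    (r + 1) * ∑ k ∈ range m, Nat.descFactorial k r = Nat.descFactorial m (r + 1) := by
  induction m with
  | zero => simp
  | succ m ih =>
    rw [Finset.sum_range_succ, Nat.mul_add, ih, Nat.succ_descFactorial_succ,
      Nat.descFactorial_succ]
    rcases le_or_gt r m with h | h
    · have : m - r + (r + 1) = m + 1 := by omega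
      nlinarith [this]
    · rw [Nat.descFactorial_eq_zero_iff_lt.2 h]
      simp [Nat.descFactorial_eq_zero_iff_lt.2 (by omega : m < r)]

lemma cdF1 (k : ℕ) : ((Nat.descFactorial k 1 : ℕ) : ℂ) = k := by simp
lemma cdF2 (k : ℕ) : ((Nat.descFactorial k 2 : ℕ) : ℂ) = k * (k - 1) := by
  cases k with
  | zero => simp
  | succ n => rw [Nat.succ_descFactorial_succ]; push_cast [cdF1]; ring
lemma cdF3 (k : ℕ) : ((Nat.descFactorial k 3 : ℕ) : ℂ) = k * (k - 1) * (k - 2) := by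
  cases k with
  | zero => simp
  | succ n => rw [Nat.succ_descFactorial_succ]; push_cast [cdF2]; ring
lemma cdF4 (k : ℕ) : ((Nat.descFactorial k 4 : ℕ) : ℂ) = k * (k - 1) * (k - 2) * (k - 3) := by
  cases k with
  | zero => simp
  | succ n => rw [Nat.succ_descFactorial_succ]; push_cast [cdF3]; ring
lemma cdF5 (k : ℕ) : ((Nat.descFactorial k 5 : ℕ) : ℂ) = k * (k - 1) * (k - 2) * (k - 3) * (k - 4) := by
  cases k with
  | zero => simp
  | succ n => rw [Nat.succ_descFactorial_succ]; push_cast [cdF4]; ring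


lemma nest1 (S : Finset ℂ) (a : ℂ → ℂ) :
    ∑ μ ∈ S, a μ * (∑ ν ∈ S.erase μ, a ν)
      = (∑ μ ∈ S, a μ)^2 - ∑ μ ∈ S, (a μ)^2 := by
  have h : ∀ μ ∈ S, a μ * (∑ ν ∈ S.erase μ, a ν)
      = (∑ ν ∈ S, a ν) * a μ - (a μ)^2 := by
    intro μ hμ
    rw [Finset.sum_erase_eq_sub hμ]
    ring
  rw [Finset.sum_congr rfl h, Finset.sum_sub_distrib, ← Finset.mul_sum]
  ring

lemma nest2 (S : Finset ℂ) (a : ℂ → ℂ) :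
    ∑ μ ∈ S, a μ * (∑ ν ∈ S.erase μ, a ν * (∑ ρ ∈ (S.erase μ).erase ν, a ρ))
      = (∑ μ ∈ S, a μ)^3 - 3 * (∑ μ ∈ S, a μ) * (∑ μ ∈ S, (a μ)^2)
        + 2 * ∑ μ ∈ S, (a μ)^3 := by
  have h : ∀ μ ∈ S, a μ * (∑ ν ∈ S.erase μ, a ν * (∑ ρ ∈ (S.erase μ).erase ν, a ρ))
      = ((∑ ν ∈ S, a ν)^2 - ∑ ν ∈ S, (a ν)^2) * a μ
        + (-2 * (∑ ν ∈ S, a ν)) * (a μ)^2 + 2 * (a μ)^3 := by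
    intro μ hμ
    rw [nest1 (S.erase μ) a, Finset.sum_erase_eq_sub hμ,
      Finset.sum_erase_eq_sub (f := fun ν => (a ν)^2) hμ]
    ring
  rw [Finset.sum_congr rfl h]
  simp only [Finset.sum_add_distrib, ← Finset.mul_sum]
  ring

lemma nest3 (S : Finset ℂ) (a : ℂ → ℂ) :
    ∑ μ ∈ S, a μ * (∑ ν ∈ S.erase μ, a ν * (∑ ρ ∈ (S.erase μ).erase ν, a ρ
        * (∑ σ ∈ ((S.erase μ).erase ν).erase ρ, a σ)))
      = (∑ μ ∈ S, a μ)^4 - 6 * (∑ μ ∈ S, a μ)^2 * (∑ μ ∈ S, (a μ)^2)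
        + 3 * (∑ μ ∈ S, (a μ)^2)^2 + 8 * (∑ μ ∈ S, a μ) * (∑ μ ∈ S, (a μ)^3)
        - 6 * ∑ μ ∈ S, (a μ)^4 := by
  have h : ∀ μ ∈ S, a μ * (∑ ν ∈ S.erase μ, a ν * (∑ ρ ∈ (S.erase μ).erase ν, a ρ
        * (∑ σ ∈ ((S.erase μ).erase ν).erase ρ, a σ)))
      = ((∑ ν ∈ S, a ν)^3 - 3 * (∑ ν ∈ S, a ν) * (∑ ν ∈ S, (a ν)^2)
          + 2 * ∑ ν ∈ S, (a ν)^3) * a μ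
        + (3 * (∑ ν ∈ S, (a ν)^2) - 3 * (∑ ν ∈ S, a ν)^2) * (a μ)^2
        + (6 * (∑ ν ∈ S, a ν)) * (a μ)^3 + (-6) * (a μ)^4 := by
    intro μ hμ
    rw [nest2 (S.erase μ) a, Finset.sum_erase_eq_sub hμ,
      Finset.sum_erase_eq_sub (f := fun ν => (a ν)^2) hμ,
      Finset.sum_erase_eq_sub (f := fun ν => (a ν)^3) hμ]
    ring
  rw [Finset.sum_congr rfl h]
  simp only [Finset.sum_add_distrib, ← Finset.mul_sum]
  ring

lemma key (m : ℕ) (hm : 2 ≤ m) :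
    ∑ μ ∈ (Polynomial.nthRootsFinset m (1:ℂ)).erase 1,
        ((((1:ℂ) - μ)⁻¹)^2 - ((1:ℂ) - μ)⁻¹)^2
      = ((m:ℂ)^4 + 10*(m:ℂ)^2 - 11) / 720 := by
  classical
  have hm0 : 0 < m := by omega
  have hmC : (m:ℂ) ≠ 0 := Nat.cast_ne_zero.2 (by omega)
  set S : Finset ℂ := (Polynomial.nthRootsFinset m (1:ℂ)).erase 1 with hS
  set a : ℂ → ℂ := fun μ => ((1:ℂ) - μ)⁻¹ with ha
  have hb : ∀ μ ∈ S, (1:ℂ) - μ ≠ 0 := by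
    intro μ hμ
    exact sub_ne_zero.2 (Ne.symm (Finset.ne_of_mem_erase hμ))
  set f : Polynomial ℂ := ∏ μ ∈ S, (X - C μ) with hf
  -- f is the geometric sum
  have hgeom : f = ∑ k ∈ range m, (X:ℂ[X]) ^ k := by
    have hX1 : ((X:ℂ[X]) - C 1) ≠ 0 := X_sub_C_ne_zero 1
    apply mul_left_cancel₀ hX1
    have h1 : ((X:ℂ[X]) - C 1) * f = X^m - 1 := by
      rw [hf, hS, Polynomial.X_pow_sub_one_eq_prod hm0
        (Complex.isPrimitiveRoot_exp m (by omega))]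
      exact Finset.mul_prod_erase _ (fun μ => X - C μ)
        (Polynomial.one_mem_nthRootsFinset hm0)
    have h2 : (∑ k ∈ range m, (X:ℂ[X])^k) * (X - 1) = X^m - 1 := geom_sum_mul _ m
    rw [h1, ← h2, Polynomial.C_1]
    ring
  -- values of iterated derivatives at 1, geometric side
  have hgr : ∀ r : ℕ, Polynomial.eval 1 (derivative^[r] f)
      = ∑ k ∈ range m, ((Nat.descFactorial k r : ℕ) : ℂ) := by
    intro r
    rw [hgeom, iterate_derivative_sum, Polynomial.eval_finset_sum]
    refine Finset.sum_congr rfl fun k _ => ?_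
    rw [Polynomial.iterate_derivative_X_pow_eq_natCast_mul, Polynomial.eval_mul,
      Polynomial.eval_pow, Polynomial.eval_X, Polynomial.eval_natCast, one_pow, mul_one]
  -- product side: erase-product helper
  have hper : ∀ T : Finset ℂ, T ⊆ S → ∀ μ ∈ T,
      ∏ ν ∈ T.erase μ, ((1:ℂ) - ν) = a μ * ∏ ν ∈ T, ((1:ℂ) - ν) := by
    intro T hT μ hμ
    rw [ha, inv_mul_eq_div, eq_div_iff (hb μ (hT hμ)), Finset.prod_erase_mul _ _ hμ]
  set P : ℂ := ∏ ν ∈ S, ((1:ℂ) - ν) with hPd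
  set A1 : ℂ := ∑ μ ∈ S, a μ with hA1d
  set A2 : ℂ := ∑ μ ∈ S, (a μ)^2 with hA2d
  set A3 : ℂ := ∑ μ ∈ S, (a μ)^3 with hA3d
  set A4 : ℂ := ∑ μ ∈ S, (a μ)^4 with hA4d
  have hv0 : Polynomial.eval 1 f = P := by
    rw [hf, Polynomial.eval_prod, hPd]
    exact Finset.prod_congr rfl fun ν _ => by simp
  -- derivative identities
  have hd1 : derivative^[1] f = ∑ μ ∈ S, ∏ ν ∈ S.erase μ, (X - C ν) := by
    rw [Function.iterate_one, hf]; exact derivative_prod_X_sub_C S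
  have hd2 : derivative^[2] f
      = ∑ μ ∈ S, ∑ ν ∈ S.erase μ, ∏ ρ ∈ (S.erase μ).erase ν, (X - C ρ) := by
    rw [show (2:ℕ) = 1+1 from rfl, Function.iterate_succ_apply', hd1, derivative_sum]
    exact Finset.sum_congr rfl fun μ _ => derivative_prod_X_sub_C _
  have hd3 : derivative^[3] f
      = ∑ μ ∈ S, ∑ ν ∈ S.erase μ, ∑ ρ ∈ (S.erase μ).erase ν,
          ∏ σ ∈ ((S.erase μ).erase ν).erase ρ, (X - C σ) := by
    rw [show (3:ℕ) = 2+1 from rfl, Function.iterate_succ_apply', hd2, derivative_sum]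
    refine Finset.sum_congr rfl fun μ _ => ?_
    rw [derivative_sum]
    exact Finset.sum_congr rfl fun ν _ => derivative_prod_X_sub_C _
  have hd4 : derivative^[4] f
      = ∑ μ ∈ S, ∑ ν ∈ S.erase μ, ∑ ρ ∈ (S.erase μ).erase ν,
          ∑ σ ∈ ((S.erase μ).erase ν).erase ρ,
            ∏ τ ∈ (((S.erase μ).erase ν).erase ρ).erase σ, (X - C τ) := by
    rw [show (4:ℕ) = 3+1 from rfl, Function.iterate_succ_apply', hd3, derivative_sum]
    refine Finset.sum_congr rfl fun μ _ => ?_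
    rw [derivative_sum]
    refine Finset.sum_congr rfl fun ν _ => ?_
    rw [derivative_sum]
    exact Finset.sum_congr rfl fun ρ _ => derivative_prod_X_sub_C _
  -- subset facts
  have hsub1 : ∀ μ, S.erase μ ⊆ S := fun μ => Finset.erase_subset _ _
  have hsub2 : ∀ μ ν, (S.erase μ).erase ν ⊆ S :=
    fun μ ν => (Finset.erase_subset _ _).trans (hsub1 μ)
  have hsub3 : ∀ μ ν ρ, ((S.erase μ).erase ν).erase ρ ⊆ S :=
    fun μ ν ρ => (Finset.erase_subset _ _).trans (hsub2 μ ν)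
  -- evaluations
  have hv1 : Polynomial.eval 1 (derivative^[1] f) = P * A1 := by
    rw [hd1, Polynomial.eval_finset_sum]
    have h : ∀ μ ∈ S, Polynomial.eval 1 (∏ ν ∈ S.erase μ, (X - C ν)) = a μ * P := by
      intro μ hμ
      rw [Polynomial.eval_prod]
      simp only [Polynomial.eval_sub, Polynomial.eval_X, Polynomial.eval_C]
      rw [hper S Finset.Subset.rfl μ hμ]
    rw [Finset.sum_congr rfl h, ← Finset.sum_mul, hA1d]
    ring
  have hv2 : Polynomial.eval 1 (derivative^[2] f) = P * (A1^2 - A2) := by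
    rw [hd2, Polynomial.eval_finset_sum]
    have h : ∀ μ ∈ S,
        Polynomial.eval 1 (∑ ν ∈ S.erase μ, ∏ ρ ∈ (S.erase μ).erase ν, (X - C ρ))
        = P * (a μ * ∑ ν ∈ S.erase μ, a ν) := by
      intro μ hμ
      rw [Polynomial.eval_finset_sum]
      have h2 : ∀ ν ∈ S.erase μ,
          Polynomial.eval 1 (∏ ρ ∈ (S.erase μ).erase ν, (X - C ρ))
          = (a μ * a ν) * P := by
        intro ν hν
        rw [Polynomial.eval_prod]
        simp only [Polynomial.eval_sub, Polynomial.eval_X, Polynomial.eval_C]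
        rw [hper (S.erase μ) (hsub1 μ) ν hν, hper S Finset.Subset.rfl μ hμ]
        ring
      rw [Finset.sum_congr rfl h2, ← Finset.sum_mul, ← Finset.mul_sum]
      ring
    rw [Finset.sum_congr rfl h, ← Finset.mul_sum, nest1 S a, hA1d, hA2d]
  have hv3 : Polynomial.eval 1 (derivative^[3] f)
      = P * (A1^3 - 3*A1*A2 + 2*A3) := by
    rw [hd3, Polynomial.eval_finset_sum]
    have h : ∀ μ ∈ S,
        Polynomial.eval 1 (∑ ν ∈ S.erase μ, ∑ ρ ∈ (S.erase μ).erase ν,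
          ∏ σ ∈ ((S.erase μ).erase ν).erase ρ, (X - C σ))
        = P * (a μ * ∑ ν ∈ S.erase μ, a ν
            * ∑ ρ ∈ (S.erase μ).erase ν, a ρ) := by
      intro μ hμ
      rw [Polynomial.eval_finset_sum]
      have h2 : ∀ ν ∈ S.erase μ,
          Polynomial.eval 1 (∑ ρ ∈ (S.erase μ).erase ν,
            ∏ σ ∈ ((S.erase μ).erase ν).erase ρ, (X - C σ))
          = (a μ * a ν) * P * ∑ ρ ∈ (S.erase μ).erase ν, a ρ := by
        intro ν hν
        rw [Polynomial.eval_finset_sum]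
        have h3 : ∀ ρ ∈ (S.erase μ).erase ν,
            Polynomial.eval 1 (∏ σ ∈ ((S.erase μ).erase ν).erase ρ, (X - C σ))
            = (a μ * a ν) * P * a ρ := by
          intro ρ hρ
          rw [Polynomial.eval_prod]
          simp only [Polynomial.eval_sub, Polynomial.eval_X, Polynomial.eval_C]
          rw [hper ((S.erase μ).erase ν) (hsub2 μ ν) ρ hρ,
            hper (S.erase μ) (hsub1 μ) ν hν,
            hper S Finset.Subset.rfl μ hμ]
          ring
        rw [Finset.sum_congr rfl h3, ← Finset.mul_sum]
      rw [Finset.sum_congr rfl h2]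
      have : ∀ ν ∈ S.erase μ, (a μ * a ν) * P * (∑ ρ ∈ (S.erase μ).erase ν, a ρ)
          = P * a μ * (a ν * (∑ ρ ∈ (S.erase μ).erase ν, a ρ)) := fun ν _ => by ring
      rw [Finset.sum_congr rfl this, ← Finset.mul_sum]
      ring
    rw [Finset.sum_congr rfl h]
    have : ∀ μ ∈ S, P * (a μ * ∑ ν ∈ S.erase μ, a ν * ∑ ρ ∈ (S.erase μ).erase ν, a ρ)
        = P * (a μ * ∑ ν ∈ S.erase μ, a ν * ∑ ρ ∈ (S.erase μ).erase ν, a ρ) := fun _ _ => rfl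
    rw [← Finset.mul_sum, nest2 S a, hA1d, hA2d, hA3d]
  have hv4 : Polynomial.eval 1 (derivative^[4] f)
      = P * (A1^4 - 6*A1^2*A2 + 3*A2^2 + 8*A1*A3 - 6*A4) := by
    rw [hd4, Polynomial.eval_finset_sum]
    have h : ∀ μ ∈ S,
        Polynomial.eval 1 (∑ ν ∈ S.erase μ, ∑ ρ ∈ (S.erase μ).erase ν,
          ∑ σ ∈ ((S.erase μ).erase ν).erase ρ,
            ∏ τ ∈ (((S.erase μ).erase ν).erase ρ).erase σ, (X - C τ))
        = P * (a μ * ∑ ν ∈ S.erase μ, a ν * (∑ ρ ∈ (S.erase μ).erase ν, a ρ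
            * (∑ σ ∈ ((S.erase μ).erase ν).erase ρ, a σ))) := by
      intro μ hμ
      rw [Polynomial.eval_finset_sum]
      have h2 : ∀ ν ∈ S.erase μ,
          Polynomial.eval 1 (∑ ρ ∈ (S.erase μ).erase ν,
            ∑ σ ∈ ((S.erase μ).erase ν).erase ρ,
              ∏ τ ∈ (((S.erase μ).erase ν).erase ρ).erase σ, (X - C τ))
          = P * a μ * (a ν * (∑ ρ ∈ (S.erase μ).erase ν, a ρ
              * (∑ σ ∈ ((S.erase μ).erase ν).erase ρ, a σ))) := by
        intro ν hν
        rw [Polynomial.eval_finset_sum]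
        have h3 : ∀ ρ ∈ (S.erase μ).erase ν,
            Polynomial.eval 1 (∑ σ ∈ ((S.erase μ).erase ν).erase ρ,
              ∏ τ ∈ (((S.erase μ).erase ν).erase ρ).erase σ, (X - C τ))
            = P * a μ * a ν * (a ρ * (∑ σ ∈ ((S.erase μ).erase ν).erase ρ, a σ)) := by
          intro ρ hρ
          rw [Polynomial.eval_finset_sum]
          have h4 : ∀ σ ∈ ((S.erase μ).erase ν).erase ρ,
              Polynomial.eval 1 (∏ τ ∈ (((S.erase μ).erase ν).erase ρ).erase σ, (X - C τ))
              = P * a μ * a ν * a ρ * a σ := by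
            intro σ hσ
            rw [Polynomial.eval_prod]
            simp only [Polynomial.eval_sub, Polynomial.eval_X, Polynomial.eval_C]
            rw [hper (((S.erase μ).erase ν).erase ρ) (hsub3 μ ν ρ) σ hσ,
              hper ((S.erase μ).erase ν) (hsub2 μ ν) ρ hρ,
              hper (S.erase μ) (hsub1 μ) ν hν,
              hper S Finset.Subset.rfl μ hμ]
            ring
          rw [Finset.sum_congr rfl h4, ← Finset.mul_sum]
          ring
        rw [Finset.sum_congr rfl h3, ← Finset.mul_sum]
        ring
      rw [Finset.sum_congr rfl h2, ← Finset.mul_sum]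
      ring
    rw [Finset.sum_congr rfl h, ← Finset.mul_sum, nest3 S a, hA1d, hA2d, hA3d, hA4d]
  -- combine with geometric-side values
  have hsum : ∀ r : ℕ, ((r:ℂ)+1) * Polynomial.eval 1 (derivative^[r] f)
      = ((Nat.descFactorial m (r+1) : ℕ) : ℂ) := by
    intro r
    rw [hgr r, ← nat_sum_dF r m]
    push_cast
    ring
  have hPm : P = (m:ℂ) := by
    have h0 := hsum 0
    rw [Function.iterate_zero_apply, hv0, cdF1] at h0
    linear_combination h0
  have e1 := hsum 1
  rw [hv1, cdF2, hPm] at e1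
  have e2 := hsum 2
  rw [hv2, cdF3, hPm] at e2
  have e3 := hsum 3
  rw [hv3, cdF4, hPm] at e3
  have e4 := hsum 4
  rw [hv4, cdF5, hPm] at e4
  push_cast at e1 e2 e3 e4
  -- solve for A1..A4
  have hA1v : A1 = ((m:ℂ)-1)/2 := by
    apply mul_left_cancel₀ hmC
    linear_combination e1 / 2
  rw [hA1v] at e2 e3 e4
  have hA2v : A2 = (-(m:ℂ)^2 + 6*m - 5)/12 := by
    apply mul_left_cancel₀ hmC
    linear_combination (-1/3 : ℂ) * e2
  rw [hA2v] at e3 e4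
  have hA3v : A3 = (-(m:ℂ)^2 + 4*m - 3)/8 := by
    apply mul_left_cancel₀ hmC
    linear_combination (1/8 : ℂ) * e3
  rw [hA3v] at e4
  have hA4v : A4 = ((m:ℂ)^4 - 110*m^2 + 360*m - 251)/720 := by
    apply mul_left_cancel₀ hmC
    linear_combination (-1/30 : ℂ) * e4
  -- finish
  have hgoal : ∀ μ ∈ S, ((((1:ℂ) - μ)⁻¹)^2 - ((1:ℂ) - μ)⁻¹)^2
      = (a μ)^4 - 2*(a μ)^3 + (a μ)^2 := by
    intro μ _
    simp only [ha]
    ring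
  rw [Finset.sum_congr rfl hgoal]
  simp only [Finset.sum_add_distrib, Finset.sum_sub_distrib, ← Finset.mul_sum]
  rw [← hA4d, ← hA3d, ← hA2d, hA2v, hA3v, hA4v]
  ring

/-- For every integer `m ≥ 2`, `∑_{j=1}^{m-1} 1 / sin⁴(πj/m) = (m⁴ + 10m² − 11)/45`. -/
theorem sum_csc_pow_four (m : ℕ) (hm : 2 ≤ m) :
    ∑ j ∈ Finset.Icc 1 (m - 1), 1 / (Real.sin (π * j / m)) ^ 4
      = ((m : ℝ) ^ 4 + 10 * m ^ 2 - 11) / 45 := by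
  have hm0 : 0 < m := by omega
  haveI : NeZero m := ⟨by omega⟩
  have hmC : (m:ℂ) ≠ 0 := Nat.cast_ne_zero.2 (by omega)
  have hζ : IsPrimitiveRoot (Complex.exp (2 * ↑π * Complex.I / m)) m :=
    Complex.isPrimitiveRoot_exp m (by omega)
  set ζ : ℂ := Complex.exp (2 * ↑π * Complex.I / m) with hζd
  -- per-term identity
  have hterm : ∀ j ∈ Finset.Icc 1 (m-1), ((1 / (Real.sin (π * j / m)) ^ 4 : ℝ) : ℂ)
      = 16 * ((((1:ℂ) - ζ^j)⁻¹)^2 - ((1:ℂ) - ζ^j)⁻¹)^2 := by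
    intro j hj
    rw [Finset.mem_Icc] at hj
    obtain ⟨hj1, hj2⟩ := hj
    have hjm : j < m := by omega
    have hjR : (0:ℝ) < j := by exact_mod_cast hj1
    have hjmR : (j:ℝ) < m := by exact_mod_cast hjm
    have hmR : (0:ℝ) < m := by exact_mod_cast hm0
    set θ : ℝ := π * j / m with hθd
    have hθpos : 0 < θ := by rw [hθd]; positivity
    have hθlt : θ < π := by
      rw [hθd, div_lt_iff₀ hmR]
      nlinarith [Real.pi_pos]
    have hsin : 0 < Real.sin θ := Real.sin_pos_of_pos_of_lt_pi hθpos hθlt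
    set w : ℂ := Complex.exp (θ * Complex.I) with hwd
    have hw0 : w ≠ 0 := Complex.exp_ne_zero _
    have hw2 : ζ^j = w^2 := by
      rw [hζd, hwd, ← Complex.exp_nat_mul, ← Complex.exp_nat_mul]
      congr 1
      push_cast [hθd]
      field_simp
    have hwinv : w⁻¹ = Complex.exp (-(θ:ℂ) * Complex.I) := by
      rw [hwd, ← Complex.exp_neg, neg_mul]
    have hsinw : w - w⁻¹ = 2 * Complex.I * Complex.sin (θ:ℂ) := by
      rw [hwinv, hwd, Complex.exp_mul_I, Complex.exp_mul_I, Complex.cos_neg,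
        Complex.sin_neg]
      ring
    have hww : w * w⁻¹ = 1 := mul_inv_cancel₀ hw0
    have h1z : (1:ℂ) - ζ^j = -(w * (2 * Complex.I * Complex.sin (θ:ℂ))) := by
      rw [hw2, ← hsinw]
      linear_combination -hww
    have hsinC : (Real.sin θ : ℂ) = Complex.sin (θ:ℂ) := Complex.ofReal_sin θ
    have hsin0 : Complex.sin (θ:ℂ) ≠ 0 := by
      rw [← hsinC]
      exact_mod_cast hsin.ne'
    have h1z0 : (1:ℂ) - ζ^j ≠ 0 := by
      rw [h1z]
      simp [hw0, hsin0, Complex.I_ne_zero]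
    have hx2 : ((1:ℂ) - ζ^j)^2 = (-4) * ζ^j * (Complex.sin (θ:ℂ))^2 := by
      rw [h1z, hw2]
      linear_combination (4 * w^2 * (Complex.sin (θ:ℂ))^2) * Complex.I_sq
    have ha : (((1:ℂ) - ζ^j)⁻¹)^2 - ((1:ℂ) - ζ^j)⁻¹
        = -1/(4 * (Complex.sin (θ:ℂ))^2) := by
      field_simp
      linear_combination hx2
    rw [ha]
    rw [show ((1 / (Real.sin θ) ^ 4 : ℝ) : ℂ) = 1 / (Complex.sin (θ:ℂ))^4 by
      push_cast [hsinC]; ring]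
    field_simp
    ring
  -- pass to ℂ
  apply Complex.ofReal_injective
  rw [Complex.ofReal_sum, Finset.sum_congr rfl hterm, ← Finset.mul_sum]
  have hbij : ∑ j ∈ Finset.Icc 1 (m-1), ((((1:ℂ) - ζ^j)⁻¹)^2 - ((1:ℂ) - ζ^j)⁻¹)^2
      = ∑ μ ∈ (Polynomial.nthRootsFinset m (1:ℂ)).erase 1,
          ((((1:ℂ) - μ)⁻¹)^2 - ((1:ℂ) - μ)⁻¹)^2 := by
    refine Finset.sum_nbij (fun j => ζ^j) ?_ ?_ ?_ (fun a _ => rfl)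
    · intro j hj
      rw [Finset.mem_Icc] at hj
      refine Finset.mem_erase.2 ⟨hζ.pow_ne_one_of_pos_of_lt (by omega) (by omega), ?_⟩
      refine (Polynomial.mem_nthRootsFinset hm0 (1:ℂ)).2 ?_
      rw [← pow_mul, mul_comm, pow_mul, hζ.pow_eq_one, one_pow]
    · intro i hi j hj h
      simp only [Finset.coe_Icc, Set.mem_Icc] at hi hj
      exact hζ.pow_inj (by omega) (by omega) h
    · intro μ hμ
      simp only [Finset.coe_erase, Set.mem_diff, Finset.mem_coe,
        Set.mem_singleton_iff] at hμ
      obtain ⟨hμm, hμ1⟩ := hμ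
      obtain ⟨i, him, hie⟩ :=
        hζ.eq_pow_of_pow_eq_one ((Polynomial.mem_nthRootsFinset hm0 (1:ℂ)).1 hμm)
      have hi0 : i ≠ 0 := by
        rintro rfl
        exact hμ1 (by simpa using hie.symm)
      exact ⟨i, by simp only [Finset.coe_Icc, Set.mem_Icc]; omega, hie⟩
  rw [hbij, key m hm]
  push_cast
  ring
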